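/- Let G be a connected self-contained graph whose foundation is nonempty and finite. Then the foundation contains a vertex whose degree in G is infinite. -/

import Mathlib

open SimpleGraph Function Set

/-- `s` is the vertex set of a removable subgraph of `G`: it is nonempty, proper,
and deleting it yields a graph isomorphic to `G`. -/
def IsRemovable {V : Type*} (G : SimpleGraph V) (s : Set V) : Prop :=
  s.Nonempty ∧ s ≠ Set.univ ∧ Nonempty (G ≃g (G.induce sᶜ))

/-- `G` is self-contained: isomorphic to a proper induced subgraph of itself. -/
def SelfContained {V : Type*} (G : SimpleGraph V) : Prop :=
  ∃ t : Set V, t ≠ Set.univ ∧ Nonempty (G ≃g G.induce t)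

/-- The vertex set of the foundation of `G`: vertices in no removable subgraph. -/
def FndSet {V : Type*} (G : SimpleGraph V) : Set V :=
  {v | ∀ s : Set V, IsRemovable G s → v ∉ s}

/-- The set of twisted vertices for a removable vertex set `h`. -/
def TorSet {V : Type*} (G : SimpleGraph V) (h : Set V) : Set V :=
  {v | (∃ s, IsRemovable G s ∧ v ∈ s) ∧
    ∃ hv : v ∈ hᶜ, (⟨v, hv⟩ : ↥hᶜ) ∈ FndSet (G.induce hᶜ)}

/-- Restriction of an isomorphism to an induced subgraph (preimage form). -/
noncomputable def isoInducePreimage {V W : Type*} {G : SimpleGraph V} {H : SimpleGraph W}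
    (e : G ≃g H) (t : Set W) : G.induce (⇑e ⁻¹' t) ≃g H.induce t :=
  { Equiv.subtypeEquiv e.toEquiv (fun _ => Iff.rfl) with
    map_rel_iff' := by
      intro a b
      exact e.map_adj_iff }

/-- Induce of induce is induce of the image. -/
noncomputable def isoInduceImage {V : Type*} (G : SimpleGraph V) (s : Set V) (t : Set ↥s) :
    (G.induce s).induce t ≃g G.induce (Subtype.val '' t) :=
  { Equiv.Set.image Subtype.val t Subtype.val_injective with
    map_rel_iff' := by
      intro a b
      simp }

lemma IsRemovable.image {V W : Type*} {G : SimpleGraph V} {H : SimpleGraph W}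
    (e : G ≃g H) {s : Set V} (hs : IsRemovable G s) : IsRemovable H (⇑e '' s) := by
  obtain ⟨hne, huniv, ⟨φ⟩⟩ := hs
  refine ⟨hne.image _, ?_, ?_⟩
  · intro h
    obtain ⟨x, hx⟩ := (Set.ne_univ_iff_exists_notMem s).mp huniv
    have hmem : e x ∈ ⇑e '' s := h ▸ Set.mem_univ _
    obtain ⟨y, hy, hxy⟩ := hmem
    exact hx (e.injective hxy ▸ hy)
  · have hpre : ⇑e ⁻¹' (⇑e '' s)ᶜ = sᶜ := by
      rw [Set.preimage_compl, Set.preimage_image_eq _ e.injective]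
    exact ⟨(e.symm.trans φ).trans (hpre ▸ isoInducePreimage e (⇑e '' s)ᶜ)⟩

lemma IsRemovable.union {V : Type*} {G : SimpleGraph V} {s : Set V}
    (hs : IsRemovable G s) {r : Set ↥sᶜ} (hr : IsRemovable (G.induce sᶜ) r) :
    IsRemovable G (s ∪ Subtype.val '' r) := by
  obtain ⟨hne, huniv, ⟨φ⟩⟩ := hs
  obtain ⟨hrne, hruniv, ⟨ψ⟩⟩ := hr
  have hset : Subtype.val '' rᶜ = (s ∪ Subtype.val '' r)ᶜ := by
    ext x
    simp only [Set.mem_image, Set.mem_compl_iff, Set.mem_union, not_or]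
    constructor
    · rintro ⟨y, hy, rfl⟩
      refine ⟨y.2, ?_⟩
      rintro ⟨z, hz, hzx⟩
      exact hy (by rwa [Subtype.val_injective hzx] at hz)
    · rintro ⟨hxs, hxr⟩
      exact ⟨⟨x, hxs⟩, fun h => hxr ⟨⟨x, hxs⟩, h, rfl⟩, rfl⟩
  obtain ⟨x, hx⟩ := hne
  refine ⟨⟨x, Or.inl hx⟩, ?_, ?_⟩
  · intro h
    obtain ⟨y, hy⟩ := (Set.ne_univ_iff_exists_notMem r).mp hruniv
    have hmem : (y : V) ∈ s ∪ Subtype.val '' r := h ▸ Set.mem_univ _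
    rcases hmem with h1 | ⟨z, hz, hzy⟩
    · exact y.2 h1
    · exact hy (by rwa [Subtype.val_injective hzy] at hz)
  · exact ⟨(φ.trans ψ).trans (hset ▸ isoInduceImage G sᶜ rᶜ)⟩

lemma fnd_of_iso {V W : Type*} {G : SimpleGraph V} {H : SimpleGraph W} (e : G ≃g H)
    {w : W} (hw : w ∈ FndSet H) : e.symm w ∈ FndSet G := by
  intro s hs hmem
  exact hw (⇑e '' s) (hs.image e) ⟨_, hmem, e.apply_symm_apply w⟩

lemma fnd_induce {V : Type*} {G : SimpleGraph V} {s : Set V} (hs : IsRemovable G s)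
    {v : V} (hv : v ∈ FndSet G) (hvc : v ∈ sᶜ) :
    (⟨v, hvc⟩ : ↥sᶜ) ∈ FndSet (G.induce sᶜ) := by
  intro r hr hmem
  exact hv _ (hs.union hr) (Or.inr ⟨_, hmem, rfl⟩)

lemma cross_edge {V : Type*} {G : SimpleGraph V} {F : Set V} :
    ∀ {a b : V}, G.Walk a b → a ∈ F → b ∉ F → ∃ x ∈ F, ∃ y, y ∉ F ∧ G.Adj x y := by
  intro a b w
  induction w with
  | nil => intro ha hb; exact absurd ha hb
  | @cons u v c h p ih =>
    intro ha hb
    by_cases hm : v ∈ F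
    · exact ih hm hb
    · exact ⟨u, ha, v, hm, h⟩

theorem stmt8 {V : Type*} (G : SimpleGraph V) (hG : SelfContained G)
    (hc : G.Connected) (hne : (FndSet G).Nonempty) (hfin : (FndSet G).Finite) :
    ∃ v ∈ FndSet G, (G.neighborSet v).Infinite := by
  by_contra hcon
  push_neg at hcon
  have hNfin : ∀ v ∈ FndSet G, (G.neighborSet v).Finite := fun v hv =>
    hcon v hv
  have key : ∀ s : Set V, IsRemovable G s → ∀ v ∈ FndSet G, ∀ w, G.Adj v w → w ∉ s := by
    intro s hs v hv w hadj hws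
    obtain ⟨φ⟩ := hs.2.2
    set g : V → V := fun x => ((φ x : ↥sᶜ) : V) with hg
    have hginj : Function.Injective g := fun a b h => φ.injective (Subtype.val_injective h)
    have hgadj : ∀ a b, G.Adj a b → G.Adj (g a) (g b) := by
      intro a b hab
      exact (φ.map_adj_iff.mpr hab : (G.induce sᶜ).Adj _ _)
    have hgrange : ∀ x, g x ∈ sᶜ := fun x => (φ x).2
    have hsub : FndSet G ⊆ g '' FndSet G := by
      intro u hu
      have hus : u ∈ sᶜ := hu s hs
      have h1 : (⟨u, hus⟩ : ↥sᶜ) ∈ FndSet (G.induce sᶜ) := fnd_induce hs hu hus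
      refine ⟨φ.symm ⟨u, hus⟩, fnd_of_iso φ h1, ?_⟩
      show ((φ (φ.symm ⟨u, hus⟩) : ↥sᶜ) : V) = u
      rw [φ.apply_symm_apply]
    have himg : FndSet G = g '' FndSet G :=
      Set.eq_of_subset_of_ncard_le hsub
        (le_of_eq (Set.ncard_image_of_injective _ hginj)) (hfin.image g)
    have hmapF : ∀ u ∈ FndSet G, g u ∈ FndSet G := by
      intro u hu
      have h3 : g u ∈ g '' FndSet G := Set.mem_image_of_mem g hu
      rwa [← himg] at h3
    haveI : Finite ↥(FndSet G) := hfin.to_subtype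
    let f : ↥(FndSet G) → ↥(FndSet G) := fun x => ⟨g ↑x, hmapF ↑x x.2⟩
    have hfinj : Function.Injective f := by
      intro a b h
      apply Subtype.ext
      have h4 : (f a : V) = (f b : V) := congrArg Subtype.val h
      exact hginj h4
    have hfbij := Finite.injective_iff_bijective.mp hfinj
    let e : Equiv.Perm ↥(FndSet G) := Equiv.ofBijective f hfbij
    have hcoe : ∀ (k : ℕ) (x : ↥(FndSet G)), g^[k] ↑x = ↑((e ^ k) x) := by
      intro k
      induction k with
      | zero => intro x; simp
      | succ k ih =>
        intro x
        rw [Function.iterate_succ_apply, pow_succ, Equiv.Perm.mul_apply]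
        exact ih (e x)
    set n := orderOf e with hn
    have hnpos : 0 < n := orderOf_pos e
    have hfix : ∀ x ∈ FndSet G, g^[n] x = x := by
      intro x hx
      have h2 := hcoe n ⟨x, hx⟩
      rw [pow_orderOf_eq_one e] at h2
      simpa using h2
    have hitadj : ∀ (k : ℕ) (a b : V), G.Adj a b → G.Adj (g^[k] a) (g^[k] b) := by
      intro k
      induction k with
      | zero => intro a b h; exact h
      | succ k ih =>
        intro a b h
        rw [Function.iterate_succ_apply, Function.iterate_succ_apply]
        exact ih _ _ (hgadj _ _ h)
    have hmaps : ∀ u ∈ G.neighborSet v, g^[n] u ∈ G.neighborSet v := by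
      intro u hu
      have h1 : G.Adj (g^[n] v) (g^[n] u) := hitadj n v u hu
      rwa [hfix v hv] at h1
    have himg2 : g^[n] '' G.neighborSet v = G.neighborSet v :=
      Set.eq_of_subset_of_ncard_le
        (fun x hx => by obtain ⟨u, hu, rfl⟩ := hx; exact hmaps u hu)
        (Set.ncard_image_of_injective _ (hginj.iterate n)).ge (hNfin v hv)
    have hw' : w ∈ g^[n] '' G.neighborSet v := by
      rw [himg2]; exact hadj
    obtain ⟨u, hu, hrfl⟩ := hw'
    obtain ⟨m, hm⟩ := Nat.exists_eq_succ_of_ne_zero hnpos.ne'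
    rw [← hrfl, hm, Function.iterate_succ_apply'] at hws
    exact hgrange _ hws
  obtain ⟨t, ht, ⟨φ0⟩⟩ := hG
  obtain ⟨v0, hv0⟩ := hne
  have htc : IsRemovable G tᶜ := by
    refine ⟨Set.nonempty_compl.mpr ht, ?_, ⟨by rw [compl_compl]; exact φ0⟩⟩
    intro h
    have h2 : (φ0 v0 : V) ∈ tᶜ := h.symm ▸ Set.mem_univ _
    exact h2 (φ0 v0).2
  obtain ⟨x, hx⟩ := Set.nonempty_compl.mpr ht
  have hxF : x ∉ FndSet G := fun hxf => hxf tᶜ htc hx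
  obtain ⟨p⟩ := hc.preconnected v0 x
  obtain ⟨a, ha, b, hb, hab⟩ := cross_edge p hv0 hxF
  have hbs : ∃ s, IsRemovable G s ∧ b ∈ s := by
    by_contra h
    push_neg at h
    exact hb (fun s hs => h s hs)
  obtain ⟨s, hs, hbs'⟩ := hbs
  exact key s hs a ha b hab hbs'
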